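/- Let d ≥ 1, let ρ be any bijection of {0,1}^d, and let G be the pair of d-dimensional butterflies with gluing bijection ρ. Suppose that for every vertex u on layer ⌊d/2⌋ and every vertex v on layer 2d − ⌊d/2⌋ there is a directed path in G from u to v. Then for every set A of input nodes and every set B of output nodes with |A| = |B| ≤ 2^⌊d/2⌋, and every bijection φ : A → B, there exists a family of |A| directed paths, each visiting no vertex twice and no two sharing any vertex, such that for each a ∈ A one of the paths runs from a to φ(a). -/

import Mathlib

/-- Edge relation of a pair of `d`-dimensional standard butterflies glued by the
bijection `ρ` of `{0,1}^d` (see the paper): a directed edge runs from the vertex with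
label `b` on layer `i` to the vertex with label `b'` on layer `i+1`. -/
def pairStep (d : ℕ) (ρ : (Fin d → Bool) ≃ (Fin d → Bool)) (i : ℕ)
    (b b' : Fin d → Bool) : Prop :=
  if h : i < d then
    ∀ k : Fin d, k ≠ ⟨i, h⟩ → b k = b' k
  else if h' : i < 2 * d then
    ∀ k : Fin d, k ≠ (⟨i - d, by omega⟩ : Fin d) →
      (if i = d then ρ b else b) k = b' k
  else False

/-- `Reaches d ρ i b i' b'` says there is a directed path in the pair of butterflies
from the vertex with label `b` on layer `i` to the vertex with label `b'` on layer
`i'`. -/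
def Reaches (d : ℕ) (ρ : (Fin d → Bool) ≃ (Fin d → Bool))
    (i : ℕ) (b : Fin d → Bool) (i' : ℕ) (b' : Fin d → Bool) : Prop :=
  ∃ f : ℕ → (Fin d → Bool), f i = b ∧ f i' = b' ∧
    ∀ j, i ≤ j → j < i' → pairStep d ρ j (f j) (f (j + 1))

namespace MiniRe

variable {d : ℕ}

/-- numeric key of a bit string: standard binary value. -/
def key (a : Fin d → Bool) : ℕ := ∑ i : Fin d, (if a i then 1 else 0) * 2 ^ (i : ℕ)

lemma key_eq (a : Fin d → Bool) :
    key a = ((finFunctionFinEquiv (fun i => if a i then (1 : Fin 2) else 0) : Fin (2 ^ d)) : ℕ) := by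
  rw [finFunctionFinEquiv_apply]
  refine Finset.sum_congr rfl fun i _ => ?_
  by_cases h : a i <;> simp [h]

lemma key_inj : Function.Injective (key (d := d)) := by
  intro a a' h
  rw [key_eq, key_eq] at h
  have h2 := finFunctionFinEquiv.injective (Fin.val_injective h)
  funext k
  have hk := congrFun h2 k
  by_cases h1 : a k <;> by_cases h3 : a' k <;> simp [h1, h3] at hk ⊢

lemma sum_two_pow (j : ℕ) : (∑ n ∈ Finset.range j, 2 ^ n) = 2 ^ j - 1 := by
  induction j with
  | zero => simp
  | succ n ih =>
    rw [Finset.sum_range_succ, ih]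
    have : 1 ≤ 2 ^ n := Nat.one_le_two_pow
    ring_nf
    omega

lemma low_lt (a : Fin d → Bool) (j : ℕ) :
    (∑ i ∈ Finset.univ.filter (fun i : Fin d => (i : ℕ) < j),
      (if a i then 1 else 0) * 2 ^ (i : ℕ)) < 2 ^ j := by
  have h1 : (∑ i ∈ Finset.univ.filter (fun i : Fin d => (i : ℕ) < j),
      (if a i then 1 else 0) * 2 ^ (i : ℕ)) ≤
      ∑ i ∈ Finset.univ.filter (fun i : Fin d => (i : ℕ) < j), 2 ^ (i : ℕ) := by
    refine Finset.sum_le_sum fun i _ => ?_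
    by_cases h : a i <;> simp [h]
  have h2 : (∑ i ∈ Finset.univ.filter (fun i : Fin d => (i : ℕ) < j), 2 ^ (i : ℕ)) =
      ∑ n ∈ (Finset.univ.filter (fun i : Fin d => (i : ℕ) < j)).image Fin.val, 2 ^ n := by
    rw [Finset.sum_image]
    intro x _ y _ hxy
    exact Fin.ext hxy
  have h3 : (∑ n ∈ (Finset.univ.filter (fun i : Fin d => (i : ℕ) < j)).image Fin.val, 2 ^ n) ≤
      ∑ n ∈ Finset.range j, 2 ^ n := by
    refine Finset.sum_le_sum_of_subset ?_
    intro n hn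
    simp only [Finset.mem_image, Finset.mem_filter, Finset.mem_univ, true_and] at hn
    obtain ⟨i, hi, rfl⟩ := hn
    exact Finset.mem_range.2 hi
  have h4 := sum_two_pow j
  have h5 : 1 ≤ 2 ^ j := Nat.one_le_two_pow
  omega

lemma key_close {a a' : Fin d → Bool} {j : ℕ}
    (hag : ∀ k : Fin d, j ≤ (k : ℕ) → a k = a' k) :
    key a < key a' + 2 ^ j ∧ key a' < key a + 2 ^ j := by
  have hs := Finset.sum_filter_add_sum_filter_not Finset.univ (fun i : Fin d => (i : ℕ) < j)
      (fun i => (if a i then 1 else 0) * 2 ^ (i : ℕ))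
  have hs' := Finset.sum_filter_add_sum_filter_not Finset.univ (fun i : Fin d => (i : ℕ) < j)
      (fun i => (if a' i then 1 else 0) * 2 ^ (i : ℕ))
  have hhigh : (∑ i ∈ Finset.univ.filter (fun i : Fin d => ¬ (i : ℕ) < j),
      (if a i then 1 else 0) * 2 ^ (i : ℕ)) =
      ∑ i ∈ Finset.univ.filter (fun i : Fin d => ¬ (i : ℕ) < j),
      (if a' i then 1 else 0) * 2 ^ (i : ℕ) := by
    refine Finset.sum_congr rfl fun i hi => ?_
    simp only [Finset.mem_filter, Finset.mem_univ, true_and, not_lt] at hi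
    rw [hag i hi]
  have hl := low_lt a j
  have hl' := low_lt a' j
  unfold key
  omega

/-- rank of `a` within `S` by key order. -/
def rank (S : Finset (Fin d → Bool)) (a : Fin d → Bool) : ℕ :=
  (S.filter (fun x => key x < key a)).card

lemma rank_lt {S : Finset (Fin d → Bool)} {a : Fin d → Bool} (ha : a ∈ S) :
    rank S a < S.card := by
  refine Finset.card_lt_card ⟨Finset.filter_subset _ _, fun hsub => ?_⟩
  have := hsub ha
  simp at this

lemma rank_lt_rank (S : Finset (Fin d → Bool)) {a a' : Fin d → Bool} (ha : a ∈ S)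
    (hk : key a < key a') : rank S a < rank S a' := by
  refine Finset.card_lt_card ⟨?_, fun hsub => ?_⟩
  · intro x hx
    simp only [Finset.mem_filter] at hx ⊢
    exact ⟨hx.1, by omega⟩
  · have := hsub (Finset.mem_filter.2 ⟨ha, hk⟩)
    simp only [Finset.mem_filter] at this
    omega

lemma rank_ne (S : Finset (Fin d → Bool)) {a a' : Fin d → Bool} (ha : a ∈ S) (ha' : a' ∈ S)
    (hne : a ≠ a') : rank S a ≠ rank S a' := by
  have hkne : key a ≠ key a' := fun h => hne (key_inj h)
  rcases Nat.lt_or_ge (key a) (key a') with h | h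
  · exact Nat.ne_of_lt (rank_lt_rank S ha h)
  · exact Nat.ne_of_gt (rank_lt_rank S ha' (by omega))

lemma rank_sub_le (S : Finset (Fin d → Bool)) {a a' : Fin d → Bool} (h : key a < key a') :
    rank S a' ≤ rank S a + (key a' - key a) := by
  classical
  have h1 : S.filter (fun x => key x < key a') ⊆
      S.filter (fun x => key x < key a) ∪
      S.filter (fun x => key a ≤ key x ∧ key x < key a') := by
    intro x hx
    simp only [Finset.mem_filter, Finset.mem_union] at hx ⊢
    rcases Nat.lt_or_ge (key x) (key a) with h' | h'
    · exact Or.inl ⟨hx.1, h'⟩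
    · exact Or.inr ⟨hx.1, h', hx.2⟩
  have h2 : (S.filter (fun x => key a ≤ key x ∧ key x < key a')).card ≤ key a' - key a := by
    have h3 := Finset.card_le_card_of_injOn
      (s := S.filter (fun x => key a ≤ key x ∧ key x < key a'))
      (t := Finset.Ico (key a) (key a')) key
      (fun x hx => by
        simp only [Finset.coe_filter, Finset.mem_coe, Finset.mem_filter, Set.mem_setOf_eq] at hx
        exact Finset.mem_Ico.2 ⟨hx.2.1, hx.2.2⟩)
      (key_inj.injOn)
    simpa [Nat.card_Ico] using h3
  calc rank S a' ≤ (S.filter (fun x => key x < key a) ∪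
      S.filter (fun x => key a ≤ key x ∧ key x < key a')).card := Finset.card_le_card h1
    _ ≤ rank S a + (S.filter (fun x => key a ≤ key x ∧ key x < key a')).card :=
      Finset.card_union_le _ _
    _ ≤ rank S a + (key a' - key a) := by omega

lemma mod_ne {r r' j : ℕ} (h0 : r < r') (h1 : r' - r < 2 ^ j) :
    r % 2 ^ j ≠ r' % 2 ^ j := by
  intro h
  have hd : (2 : ℕ) ^ j ∣ r' - r := (Nat.modEq_iff_dvd' h0.le).1 h
  have := Nat.le_of_dvd (by omega) hd
  omega

lemma rank_mod_ne (S : Finset (Fin d → Bool)) {a a' : Fin d → Bool} {j : ℕ}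
    (ha : a ∈ S) (ha' : a' ∈ S) (hne : a ≠ a')
    (hag : ∀ k : Fin d, j ≤ (k : ℕ) → a k = a' k) :
    rank S a % 2 ^ j ≠ rank S a' % 2 ^ j := by
  have hkne : key a ≠ key a' := fun h => hne (key_inj h)
  have hclose := key_close hag
  rcases Nat.lt_or_ge (key a) (key a') with hlt | hge
  · have h0 := rank_lt_rank S ha hlt
    have h1 := rank_sub_le S (a := a) (a' := a') hlt
    exact mod_ne h0 (by omega)
  · have hlt' : key a' < key a := by omega
    have h0 := rank_lt_rank S ha' hlt'
    have h1 := rank_sub_le S (a := a') (a' := a) hlt'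
    exact (mod_ne h0 (by omega)).symm

lemma testBit_ne {r r' j : ℕ} (h : r % 2 ^ j ≠ r' % 2 ^ j) :
    ∃ i < j, r.testBit i ≠ r'.testBit i := by
  by_contra hc
  push_neg at hc
  apply h
  apply Nat.eq_of_testBit_eq
  intro i
  simp only [Nat.testBit_mod_two_pow]
  by_cases hij : i < j
  · simp [hij, hc i hij]
  · simp [hij]

lemma testBit_ne_of_lt {r r' j : ℕ} (hr : r < 2 ^ j) (hr' : r' < 2 ^ j) (hne : r ≠ r') :
    ∃ i < j, r.testBit i ≠ r'.testBit i := by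
  apply testBit_ne
  rw [Nat.mod_eq_of_lt hr, Nat.mod_eq_of_lt hr']
  exact hne

/-- reversal of coordinates. -/
def rev (k : Fin d) : Fin d := ⟨d - 1 - (k : ℕ), by have := k.isLt; omega⟩

lemma rev_rev (k : Fin d) : rev (rev k) = k := by
  have := k.isLt
  apply Fin.ext
  simp only [rev]
  omega

lemma comp_rev_inj : Function.Injective (fun b : Fin d → Bool => b ∘ rev) := by
  intro b b' h
  funext k
  have := congrFun h (rev k)
  simpa [Function.comp, rev_rev] using this

/-- the path template. -/
def mkPath (d : ℕ) (a w tgt c : Fin d → Bool) (j : ℕ) : Fin d → Bool :=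
  fun k => if j ≤ d then (if (k : ℕ) < j then w k else a k)
           else (if (k : ℕ) < j - d then tgt k else c k)

lemma pairStep_lt {d : ℕ} {ρ : (Fin d → Bool) ≃ (Fin d → Bool)} {i : ℕ}
    {b b' : Fin d → Bool} (hi : i < d) :
    pairStep d ρ i b b' ↔ ∀ k : Fin d, k ≠ ⟨i, hi⟩ → b k = b' k := by
  unfold pairStep
  rw [dif_pos hi]

lemma pairStep_mid {d : ℕ} {ρ : (Fin d → Bool) ≃ (Fin d → Bool)}
    {b b' : Fin d → Bool} (hd : 0 < d) :
    pairStep d ρ d b b' ↔ ∀ k : Fin d, (k : ℕ) ≠ 0 → ρ b k = b' k := by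
  unfold pairStep
  rw [dif_neg (lt_irrefl d), dif_pos (by omega)]
  simp only [if_pos rfl]
  constructor
  · intro h k hk
    exact h k fun hkk => hk (by simp [hkk])
  · intro h k hk
    exact h k fun hkk => hk (Fin.ext (by simp [hkk]))

lemma pairStep_gt {d : ℕ} {ρ : (Fin d → Bool) ≃ (Fin d → Bool)} {i : ℕ}
    {b b' : Fin d → Bool} (hi : d < i) (hi2 : i < 2 * d) :
    pairStep d ρ i b b' ↔ ∀ k : Fin d, (k : ℕ) ≠ i - d → b k = b' k := by
  unfold pairStep
  rw [dif_neg (by omega), dif_pos hi2]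
  simp only [if_neg (show ¬ i = d by omega)]
  constructor
  · intro h k hk
    exact h k fun hkk => hk (by simp [hkk])
  · intro h k hk
    exact h k fun hkk => hk (Fin.ext (by simp [hkk]))

lemma mkPath_le {d : ℕ} {a w tgt c : Fin d → Bool} {j : ℕ} (hj : j ≤ d) (k : Fin d) :
    mkPath d a w tgt c j k = if (k : ℕ) < j then w k else a k := by
  simp [mkPath, hj]

lemma mkPath_gt {d : ℕ} {a w tgt c : Fin d → Bool} {j : ℕ} (hj : ¬ j ≤ d) (k : Fin d) :
    mkPath d a w tgt c j k = if (k : ℕ) < j - d then tgt k else c k := by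
  simp [mkPath, hj]

end MiniRe

/-- Suppose in a pair of `d`-dimensional butterflies every vertex on layer `⌊d/2⌋` can
reach every vertex on layer `2d − ⌊d/2⌋` by a directed path.  Then for every set `A` of
input nodes and every set `B` of output nodes with `|A| = |B| ≤ 2^⌊d/2⌋` and every
bijection `φ` from `A` onto `B`, there is a family of pairwise vertex-disjoint directed
paths routing each `a ∈ A` to `φ a`. -/
theorem mini_rearrangeability
    (d : ℕ) (hd : 1 ≤ d) (ρ : (Fin d → Bool) ≃ (Fin d → Bool))
    (hconn : ∀ u v : Fin d → Bool, Reaches d ρ (d / 2) u (2 * d - d / 2) v)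
    (A B : Finset (Fin d → Bool)) (hAB : A.card = B.card)
    (hsize : A.card ≤ 2 ^ (d / 2))
    (φ : (Fin d → Bool) → (Fin d → Bool))
    (hmem : ∀ a ∈ A, φ a ∈ B) (hinj : Set.InjOn φ ↑A) (himg : A.image φ = B) :
    ∃ P : (Fin d → Bool) → ℕ → (Fin d → Bool),
      (∀ a ∈ A, P a 0 = a) ∧
      (∀ a ∈ A, ∀ i, i < 2 * d → pairStep d ρ i (P a i) (P a (i + 1))) ∧
      (∀ a ∈ A, ∀ a' ∈ A, a ≠ a' → ∀ i, i ≤ 2 * d → P a i ≠ P a' i) ∧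
      (∀ a ∈ A, P a (2 * d) = φ a) := by
  classical
  have hd2 : d / 2 < d := by omega
  set Bt : Finset (Fin d → Bool) := B.image (fun b => b ∘ MiniRe.rev) with hBtdef
  have hBtmem : ∀ b ∈ B, b ∘ MiniRe.rev ∈ Bt := fun b hb => by
    rw [hBtdef]; exact Finset.mem_image_of_mem _ hb
  have hBtcard : Bt.card ≤ 2 ^ (d / 2) := by
    rw [hBtdef, Finset.card_image_of_injective _ MiniRe.comp_rev_inj]
    omega
  choose F hF1 hF2 hF3 using fun a : Fin d → Bool => hconn
    (fun k => if (k : ℕ) < d / 2 then Nat.testBit (MiniRe.rank A a) (k : ℕ) else a k)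
    (fun k => if d - d / 2 ≤ (k : ℕ) then
        Nat.testBit (MiniRe.rank Bt (φ a ∘ MiniRe.rev)) (d - 1 - (k : ℕ)) else false)
  have W1core : ∀ a, ∀ m, d / 2 + m ≤ d → ∀ k : Fin d, (k : ℕ) < d / 2 →
      F a (d / 2 + m) k = Nat.testBit (MiniRe.rank A a) (k : ℕ) := by
    intro a m
    induction m with
    | zero =>
      intro _ k hk
      simpa [hk] using congrFun (hF1 a) k
    | succ n ih =>
      intro hm k hk
      have hstep := hF3 a (d / 2 + n) (by omega) (by omega)
      rw [MiniRe.pairStep_lt (by omega : d / 2 + n < d)] at hstep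
      have heq := hstep k (by
        intro hkk
        have h' : (k : ℕ) = d / 2 + n := congrArg Fin.val hkk
        omega)
      rw [show d / 2 + (n + 1) = (d / 2 + n) + 1 by omega, ← heq]
      exact ih (by omega) k hk
  have W1 : ∀ a, ∀ k : Fin d, (k : ℕ) < d / 2 →
      F a d k = Nat.testBit (MiniRe.rank A a) (k : ℕ) := by
    intro a k hk
    have h1 := W1core a (d - d / 2) (by omega) k hk
    rwa [show d / 2 + (d - d / 2) = d by omega] at h1
  have W2core : ∀ a, ∀ m, d + 1 + m ≤ 2 * d - d / 2 → ∀ k : Fin d, d - d / 2 ≤ (k : ℕ) →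
      F a (d + 1 + m) k = ρ (F a d) k := by
    intro a m
    induction m with
    | zero =>
      intro _ k hk
      have hstep := hF3 a d (by omega) (by omega)
      rw [MiniRe.pairStep_mid (by omega)] at hstep
      exact (hstep k (by omega)).symm
    | succ n ih =>
      intro hm k hk
      have hstep := hF3 a (d + 1 + n) (by omega) (by omega)
      rw [MiniRe.pairStep_gt (by omega) (by omega)] at hstep
      have heq := hstep k (by omega)
      rw [show d + 1 + (n + 1) = (d + 1 + n) + 1 by omega, ← heq]
      exact ih (by omega) k hk
  have W2 : ∀ a, ∀ k : Fin d, d - d / 2 ≤ (k : ℕ) →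
      ρ (F a d) k = Nat.testBit (MiniRe.rank Bt (φ a ∘ MiniRe.rev)) (d - 1 - (k : ℕ)) := by
    intro a k hk
    have h1 := W2core a (2 * d - d / 2 - (d + 1)) (by omega) k hk
    rw [show d + 1 + (2 * d - d / 2 - (d + 1)) = 2 * d - d / 2 by omega] at h1
    rw [← h1]
    simpa [hk] using congrFun (hF2 a) k
  refine ⟨fun a => MiniRe.mkPath d a (F a d) (φ a) (ρ (F a d)), ?_, ?_, ?_, ?_⟩
  · intro a _
    funext k
    simp [MiniRe.mkPath]
  · intro a _ i hi
    beta_reduce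
    rcases Nat.lt_trichotomy i d with hlt | heq | hgt
    · rw [MiniRe.pairStep_lt hlt]
      intro k hk
      have hkv : (k : ℕ) ≠ i := fun h => hk (Fin.ext h)
      rw [MiniRe.mkPath_le (by omega), MiniRe.mkPath_le (by omega)]
      by_cases hki : (k : ℕ) < i
      · rw [if_pos hki, if_pos (by omega : (k : ℕ) < i + 1)]
      · rw [if_neg hki, if_neg (by omega : ¬ (k : ℕ) < i + 1)]
    · rw [heq]
      rw [MiniRe.pairStep_mid (by omega)]
      intro k hk
      have hPd : MiniRe.mkPath d a (F a d) (φ a) (ρ (F a d)) d = F a d := by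
        funext k'
        rw [MiniRe.mkPath_le le_rfl, if_pos k'.isLt]
      rw [hPd, MiniRe.mkPath_gt (by omega : ¬ d + 1 ≤ d),
        if_neg (by omega : ¬ (k : ℕ) < d + 1 - d)]
    · rw [MiniRe.pairStep_gt hgt hi]
      intro k hk
      rw [MiniRe.mkPath_gt (by omega), MiniRe.mkPath_gt (by omega)]
      by_cases hki : (k : ℕ) < i - d
      · rw [if_pos hki, if_pos (by omega : (k : ℕ) < i + 1 - d)]
      · rw [if_neg hki, if_neg (by omega : ¬ (k : ℕ) < i + 1 - d)]
  · intro a ha a' ha' hne i hi hEq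
    have happ : ∀ k : Fin d, MiniRe.mkPath d a (F a d) (φ a) (ρ (F a d)) i k =
        MiniRe.mkPath d a' (F a' d) (φ a') (ρ (F a' d)) i k := fun k => congrFun hEq k
    rcases le_or_gt i d with hid | hid
    · -- left half, layers 0..d
      have key : ∃ t, t < d / 2 ∧
          Nat.testBit (MiniRe.rank A a) t ≠ Nat.testBit (MiniRe.rank A a') t ∧ t < i := by
        by_cases hih : i ≤ d / 2
        · have hag : ∀ k : Fin d, i ≤ (k : ℕ) → a k = a' k := by
            intro k hk
            have h0 := happ k
            rw [MiniRe.mkPath_le hid, MiniRe.mkPath_le hid,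
              if_neg (Nat.not_lt.2 hk), if_neg (Nat.not_lt.2 hk)] at h0
            exact h0
          obtain ⟨t, ht, hbit⟩ := MiniRe.testBit_ne (MiniRe.rank_mod_ne A ha ha' hne hag)
          exact ⟨t, by omega, hbit, ht⟩
        · have hrne := MiniRe.rank_ne A ha ha' hne
          have hra := MiniRe.rank_lt ha
          have hra' := MiniRe.rank_lt ha'
          obtain ⟨t, ht, hbit⟩ := MiniRe.testBit_ne_of_lt
            (by omega : MiniRe.rank A a < 2 ^ (d / 2))
            (by omega : MiniRe.rank A a' < 2 ^ (d / 2)) hrne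
          exact ⟨t, ht, hbit, by omega⟩
      obtain ⟨t, htd2, hbit, hti⟩ := key
      have htd : t < d := by omega
      have h0 := happ ⟨t, htd⟩
      rw [MiniRe.mkPath_le hid, MiniRe.mkPath_le hid,
        if_pos (show ((⟨t, htd⟩ : Fin d) : ℕ) < i from hti),
        if_pos (show ((⟨t, htd⟩ : Fin d) : ℕ) < i from hti)] at h0
      rw [W1 a ⟨t, htd⟩ (show ((⟨t, htd⟩ : Fin d) : ℕ) < d / 2 from htd2),
        W1 a' ⟨t, htd⟩ (show ((⟨t, htd⟩ : Fin d) : ℕ) < d / 2 from htd2)] at h0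
      exact hbit h0
    · -- right half, layers d+1..2d
      have hbne : φ a ≠ φ a' :=
        fun e => hne (hinj (Finset.mem_coe.2 ha) (Finset.mem_coe.2 ha') e)
      have hagt : ∀ k : Fin d, (k : ℕ) < i - d → φ a k = φ a' k := by
        intro k hk
        have h0 := happ k
        rw [MiniRe.mkPath_gt (by omega), MiniRe.mkPath_gt (by omega),
          if_pos hk, if_pos hk] at h0
        exact h0
      rcases Nat.eq_or_lt_of_le hi with h2d | h2d
      · exact hbne (funext fun k => hagt k (by have := k.isLt; omega))
      · have htne : φ a ∘ MiniRe.rev ≠ φ a' ∘ MiniRe.rev :=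
          fun e => hbne (MiniRe.comp_rev_inj e)
        have htm : φ a ∘ MiniRe.rev ∈ Bt := hBtmem _ (hmem a ha)
        have htm' : φ a' ∘ MiniRe.rev ∈ Bt := hBtmem _ (hmem a' ha')
        have hag2 : ∀ k : Fin d, d - (i - d) ≤ (k : ℕ) →
            (φ a ∘ MiniRe.rev) k = (φ a' ∘ MiniRe.rev) k := by
          intro k hk
          have hkl := k.isLt
          show φ a (MiniRe.rev k) = φ a' (MiniRe.rev k)
          apply hagt
          show d - 1 - (k : ℕ) < i - d
          omega
        have key : ∃ t, t < d - (i - d) ∧ t < d / 2 + (d - (i - d)) ∧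
            Nat.testBit (MiniRe.rank Bt (φ a ∘ MiniRe.rev)) t ≠
            Nat.testBit (MiniRe.rank Bt (φ a' ∘ MiniRe.rev)) t ∧ d - d / 2 ≤ d - 1 - t := by
          by_cases hcase : d - d / 2 ≤ i - d
          · obtain ⟨t, ht, hbit⟩ :=
              MiniRe.testBit_ne (MiniRe.rank_mod_ne Bt htm htm' htne hag2)
            exact ⟨t, ht, by omega, hbit, by omega⟩
          · have hr1 := MiniRe.rank_lt htm
            have hr2 := MiniRe.rank_lt htm'
            obtain ⟨t, ht, hbit⟩ := MiniRe.testBit_ne_of_lt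
              (by omega : MiniRe.rank Bt (φ a ∘ MiniRe.rev) < 2 ^ (d / 2))
              (by omega : MiniRe.rank Bt (φ a' ∘ MiniRe.rev) < 2 ^ (d / 2))
              (MiniRe.rank_ne Bt htm htm' htne)
            refine ⟨t, by omega, by omega, hbit, by omega⟩
        obtain ⟨t, ht1, ht2, hbit, ht3⟩ := key
        have htd : d - 1 - t < d := by omega
        have hkv : d - d / 2 ≤ ((⟨d - 1 - t, htd⟩ : Fin d) : ℕ) := ht3
        have h0 := happ ⟨d - 1 - t, htd⟩
        rw [MiniRe.mkPath_gt (by omega), MiniRe.mkPath_gt (by omega),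
          if_neg (show ¬ ((⟨d - 1 - t, htd⟩ : Fin d) : ℕ) < i - d by
            show ¬ d - 1 - t < i - d
            omega),
          if_neg (show ¬ ((⟨d - 1 - t, htd⟩ : Fin d) : ℕ) < i - d by
            show ¬ d - 1 - t < i - d
            omega)] at h0
        rw [W2 a ⟨d - 1 - t, htd⟩ hkv, W2 a' ⟨d - 1 - t, htd⟩ hkv] at h0
        rw [show d - 1 - ((⟨d - 1 - t, htd⟩ : Fin d) : ℕ) = t by
          show d - 1 - (d - 1 - t) = t
          omega] at h0
        exact hbit h0
  · intro a _
    funext k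
    beta_reduce
    have hkl := k.isLt
    rw [MiniRe.mkPath_gt (by omega : ¬ 2 * d ≤ d),
      if_pos (by omega : (k : ℕ) < 2 * d - d)]
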